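/- Let n ≥ 1 and K ≥ 1. If z ∈ ℝⁿ is a non-zero vector with logarithmic diameter ℓ(z) ≤ K, then there exists a non-zero binary vector ξ ∈ {0,1}ⁿ such that |⟨z,ξ⟩|/(‖z‖‖ξ‖) ≥ 1/√(2(log K + 1)). -/

import Mathlib

open scoped BigOperators

/-- Euclidean norm of a real vector. -/
noncomputable def enR {n : ℕ} (v : Fin n → ℝ) : ℝ :=
  Real.sqrt (∑ i, v i ^ 2)

/-- Logarithmic diameter of a real vector. -/
noncomputable def logDiamR {n : ℕ} (z : Fin n → ℝ) : ℝ :=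
  (⨆ i, |z i|) / sInf {r | ∃ i, z i ≠ 0 ∧ r = |z i|}

open Finset

lemma tele (b : ℕ → ℝ) (t : ℕ) : ∑ i ∈ range t, ((i:ℝ)+1) * (b i - b (i+1))
    = (∑ i ∈ range (t+1), b i) - ((t:ℝ)+1) * b t := by
  induction t with
  | zero => simp
  | succ t ih =>
    rw [sum_range_succ, ih, sum_range_succ (n := t+1)]
    push_cast; ring

lemma combin (a b t w : ℝ) (ha : 0 ≤ a) (hb : 0 ≤ b) (ht : 0 ≤ t)
    (hw : a^2 + b^2 = w) : (a + b*t)^2 ≤ w * (1 + t^2) := by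
  nlinarith [sq_nonneg (a*t - b)]

lemma key (s : ℕ) (hs : 0 < s) (c : ℕ → ℝ) (hpos : ∀ m, m < s → 0 < c m)
    (hanti : ∀ m1 m2 : ℕ, m1 ≤ m2 → m2 < s → c m2 ≤ c m1)
    (K : ℝ) (hK : 1 ≤ K) (hrat : ∀ m, m < s → c 0 ≤ K * c m) :
    ∃ k, 1 ≤ k ∧ k ≤ s ∧
      (k : ℝ) * (∑ m ∈ range s, (c m)^2) ≤ (∑ m ∈ range k, c m)^2 * (1 + Real.log K) := by
  by_contra hcon
  push_neg at hcon
  set L := Real.log K with hL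
  have hL0 : 0 ≤ L := Real.log_nonneg hK
  set W := ∑ m ∈ range s, (c m)^2 with hW
  have hWpos : 0 < W := by
    apply Finset.sum_pos
    · intro m hm
      have := hpos m (mem_range.1 hm)
      positivity
    · exact ⟨0, mem_range.2 hs⟩
  set R := Real.sqrt (W / (1 + L)) with hR
  have hRpos : 0 < R := Real.sqrt_pos.2 (by positivity)
  set P := fun k => ∑ m ∈ range k, c m with hP
  have hPlt : ∀ k, 1 ≤ k → k ≤ s → P k < Real.sqrt k * R := by
    intro k h1 h2
    have h3 := hcon k h1 h2
    have hsq : P k ^ 2 < (Real.sqrt k * R) ^ 2 := by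
      rw [mul_pow, Real.sq_sqrt (by positivity : (0:ℝ) ≤ (k:ℝ)), hR,
        Real.sq_sqrt (by positivity : (0:ℝ) ≤ W / (1+L))]
      rw [← mul_div_assoc, lt_div_iff₀ (by positivity : (0:ℝ) < 1 + L)]
      simpa [hP] using h3
    exact lt_of_pow_lt_pow_left₀ 2 (by positivity) hsq
  -- Abel summation
  have habel := Finset.sum_range_by_parts c c s
  simp only [smul_eq_mul] at habel
  have hW2 : W = c (s-1) * P s + ∑ i ∈ range (s-1), (c i - c (i+1)) * P (i+1) := by
    have : ∀ i ∈ range (s-1), (c i - c (i+1)) * P (i+1) = -((c (i+1) - c i) * P (i+1)) :=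
      fun i _ => by ring
    rw [Finset.sum_congr rfl this, Finset.sum_neg_distrib]
    rw [hW]
    simp_rw [pow_two]
    rw [habel]
    ring
  -- head bound
  have hs1 : s - 1 < s := Nat.sub_lt hs one_pos
  have hcs : 0 < c (s-1) := hpos _ hs1
  have hhead : c (s-1) * P s < c (s-1) * (Real.sqrt s * R) :=
    mul_lt_mul_of_pos_left (hPlt s hs le_rfl) hcs
  -- differences
  have hΔnn : ∀ i, i < s - 1 → 0 ≤ c i - c (i+1) := by
    intro i hi
    have h' : i + 1 < s := by omega
    exact sub_nonneg.2 (hanti i (i+1) (Nat.le_succ i) h')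
  -- Cauchy-Schwarz
  have hCS := Finset.sum_sq_le_sum_mul_sum_of_sq_eq_mul (range (s-1))
      (f := fun i => ((i:ℝ)+1) * ((c i)^2 - (c (i+1))^2))
      (g := fun i => (c i - c (i+1)) / (c i + c (i+1)))
      (r := fun i => Real.sqrt ((i:ℝ)+1) * (c i - c (i+1)))
      (fun i hi => by
        have hi' := mem_range.1 hi
        have h1 : i + 1 < s := by omega
        have h2 := hanti i (i+1) (Nat.le_succ i) h1
        have h3 := hpos (i+1) h1
        exact mul_nonneg (by positivity) (by nlinarith))
      (fun i hi => by
        have hi' := mem_range.1 hi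
        have h1 : i + 1 < s := by omega
        have h2 := hΔnn i hi'
        have h3 := hpos (i+1) h1
        have h4 := hpos i (by omega)
        positivity)
      (fun i hi => by
        have hi' := mem_range.1 hi
        have h1 : i + 1 < s := by omega
        have h3 := hpos (i+1) h1
        have h4 := hpos i (by omega)
        have hne : c i + c (i+1) ≠ 0 := by positivity
        rw [mul_pow, Real.sq_sqrt (by positivity : (0:ℝ) ≤ (i:ℝ)+1)]
        field_simp
        ring)
  set u2 : ℝ := (s:ℝ) * (c (s-1))^2 with hu2
  have hsumf : ∑ i ∈ range (s-1), (((i:ℝ)+1) * ((c i)^2 - (c (i+1))^2)) = W - u2 := by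
    rw [tele (fun i => (c i)^2) (s-1)]
    have h1 : s - 1 + 1 = s := Nat.succ_pred_eq_of_pos hs
    have hcast : ((s-1 : ℕ):ℝ) = (s:ℝ) - 1 := by
      push_cast [Nat.cast_sub hs]
      ring
    rw [h1, hcast, hW, hu2]
    ring
  have hu2W : u2 ≤ W := by
    have h0 : 0 ≤ ∑ i ∈ range (s-1), (((i:ℝ)+1) * ((c i)^2 - (c (i+1))^2)) := by
      apply Finset.sum_nonneg
      intro i hi
      have hi' := mem_range.1 hi
      have h1 : i + 1 < s := by omega
      have h2 := hanti i (i+1) (Nat.le_succ i) h1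
      have h3 := hpos (i+1) h1
      exact mul_nonneg (by positivity) (by nlinarith)
    linarith [hsumf ▸ h0]
  have hsumg : ∑ i ∈ range (s-1), (c i - c (i+1)) / (c i + c (i+1)) ≤ L := by
    have hstep : ∀ i ∈ range (s-1), (c i - c (i+1)) / (c i + c (i+1)) ≤
        Real.log (c i) - Real.log (c (i+1)) := by
      intro i hi
      have hi' := mem_range.1 hi
      have h1 : i + 1 < s := by omega
      have hy := hpos (i+1) h1
      have hx := hpos i (by omega)
      have hxy := hanti i (i+1) (Nat.le_succ i) h1
      have hlog := Real.log_le_sub_one_of_pos (div_pos hy hx)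
      rw [Real.log_div (ne_of_gt hy) (ne_of_gt hx)] at hlog
      have e1 : (c i - c (i+1)) / (c i + c (i+1)) ≤ (c i - c (i+1)) / c i := by
        gcongr
        · linarith
      have e2 : (c i - c (i+1)) / c i = 1 - c (i+1) / c i := by
        field_simp
      linarith
    calc ∑ i ∈ range (s-1), (c i - c (i+1)) / (c i + c (i+1))
        ≤ ∑ i ∈ range (s-1), (Real.log (c i) - Real.log (c (i+1))) :=
          Finset.sum_le_sum hstep
      _ = Real.log (c 0) - Real.log (c (s-1)) :=
          Finset.sum_range_sub' (fun i => Real.log (c i)) (s-1)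
      _ ≤ L := by
          rw [← Real.log_div (ne_of_gt (hpos 0 hs)) (ne_of_gt hcs), hL]
          have : c 0 / c (s-1) ≤ K := (div_le_iff₀ hcs).2 (hrat (s-1) hs1)
          exact Real.log_le_log (div_pos (hpos 0 hs) hcs) this
  have hrnn : 0 ≤ ∑ i ∈ range (s-1), Real.sqrt ((i:ℝ)+1) * (c i - c (i+1)) := by
    apply Finset.sum_nonneg
    intro i hi
    exact mul_nonneg (Real.sqrt_nonneg _) (hΔnn i (mem_range.1 hi))
  have hgnn : 0 ≤ W - u2 := by linarith
  have hrle : ∑ i ∈ range (s-1), Real.sqrt ((i:ℝ)+1) * (c i - c (i+1)) ≤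
      Real.sqrt (W - u2) * Real.sqrt L := by
    rw [← Real.sqrt_mul hgnn]
    rw [Real.le_sqrt hrnn (by positivity)]
    calc (∑ i ∈ range (s-1), Real.sqrt ((i:ℝ)+1) * (c i - c (i+1)))^2
        ≤ (∑ i ∈ range (s-1), (((i:ℝ)+1) * ((c i)^2 - (c (i+1))^2))) *
          (∑ i ∈ range (s-1), (c i - c (i+1)) / (c i + c (i+1))) := hCS
      _ ≤ (W - u2) * L := by
          rw [hsumf]
          exact mul_le_mul_of_nonneg_left hsumg hgnn
  have htail : ∑ i ∈ range (s-1), (c i - c (i+1)) * P (i+1) ≤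
      Real.sqrt (W - u2) * Real.sqrt L * R := by
    calc ∑ i ∈ range (s-1), (c i - c (i+1)) * P (i+1)
        ≤ ∑ i ∈ range (s-1), (c i - c (i+1)) * (Real.sqrt ((i:ℝ)+1) * R) := by
          apply Finset.sum_le_sum
          intro i hi
          have hi' := mem_range.1 hi
          have h1 : i + 1 ≤ s := by omega
          have := hPlt (i+1) (by omega) h1
          have hcast : ((i+1 : ℕ):ℝ) = (i:ℝ)+1 := by push_cast; ring
          rw [hcast] at this
          exact mul_le_mul_of_nonneg_left (le_of_lt this) (hΔnn i hi')
      _ = (∑ i ∈ range (s-1), Real.sqrt ((i:ℝ)+1) * (c i - c (i+1))) * R := by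
          rw [Finset.sum_mul]
          exact Finset.sum_congr rfl (fun i _ => by ring)
      _ ≤ Real.sqrt (W - u2) * Real.sqrt L * R :=
          mul_le_mul_of_nonneg_right hrle (le_of_lt hRpos)
  -- final combination
  set A := Real.sqrt u2 with hA
  set B := Real.sqrt (W - u2) with hB
  have hA2 : A^2 = u2 := Real.sq_sqrt (by positivity)
  have hB2 : B^2 = W - u2 := Real.sq_sqrt hgnn
  have hLs : (Real.sqrt L)^2 = L := Real.sq_sqrt hL0
  have hheads : c (s-1) * (Real.sqrt s * R) = A * R := by
    rw [hA, hu2, Real.sqrt_mul (by positivity : (0:ℝ) ≤ (s:ℝ)), Real.sqrt_sq (le_of_lt hcs)]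
    ring
  have hcomb : A + B * Real.sqrt L ≤ Real.sqrt W * Real.sqrt (1 + L) := by
    rw [← Real.sqrt_mul (le_of_lt hWpos)]
    rw [Real.le_sqrt (by positivity) (by positivity)]
    have hw : A^2 + B^2 = W := by rw [hA2, hB2]; ring
    have := combin A B (Real.sqrt L) W (Real.sqrt_nonneg _) (Real.sqrt_nonneg _)
      (Real.sqrt_nonneg _) hw
    rw [hLs] at this
    exact this
  have hRW : Real.sqrt W * Real.sqrt (1+L) * R = W := by
    rw [hR, ← Real.sqrt_mul (le_of_lt hWpos), ← Real.sqrt_mul (by positivity : (0:ℝ) ≤ W * (1+L))]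
    rw [show W * (1+L) * (W/(1+L)) = W^2 by field_simp]
    exact Real.sqrt_sq (le_of_lt hWpos)
  have hfin : W < W := by
    calc W = c (s-1) * P s + ∑ i ∈ range (s-1), (c i - c (i+1)) * P (i+1) := hW2
    _ < c (s-1) * (Real.sqrt s * R) + Real.sqrt (W-u2) * Real.sqrt L * R :=
        add_lt_add_of_lt_of_le hhead htail
    _ = (A + B * Real.sqrt L) * R := by rw [hheads, ← hB]; ring
    _ ≤ Real.sqrt W * Real.sqrt (1+L) * R := mul_le_mul_of_nonneg_right hcomb (le_of_lt hRpos)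
    _ = W := hRW
  exact lt_irrefl W hfin

theorem stmt5 {n : ℕ} (hn : 1 ≤ n) (K : ℝ) (hK : 1 ≤ K)
    (z : Fin n → ℝ) (hz : z ≠ 0) (hl : logDiamR z ≤ K) :
    ∃ ξ : Fin n → ℝ, (∀ i, ξ i = 0 ∨ ξ i = 1) ∧ ξ ≠ 0 ∧
      |∑ i, z i * ξ i| / (enR z * enR ξ) ≥
        1 / Real.sqrt (2 * (Real.log K + 1)) := by
  classical
  obtain ⟨i₀, hi₀⟩ : ∃ i, z i ≠ 0 := by
    by_contra h; push_neg at h; exact hz (funext fun i => h i)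
  have hZpos : 0 < ∑ i, z i ^ 2 :=
    Finset.sum_pos' (fun i _ => sq_nonneg _) ⟨i₀, Finset.mem_univ _, by positivity⟩
  -- global comparability
  have hglob : ∀ i j, z j ≠ 0 → |z i| ≤ K * |z j| := by
    set Aset := {r | ∃ i, z i ≠ 0 ∧ r = |z i|} with hAset
    have hAne : Aset.Nonempty := ⟨|z i₀|, i₀, hi₀, rfl⟩
    have hAfin : Aset.Finite := by
      apply Set.Finite.subset (Set.finite_range fun i => |z i|)
      rintro r ⟨i, _, rfl⟩
      exact ⟨i, rfl⟩
    have hmem := hAne.csInf_mem hAfin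
    obtain ⟨i₁, hi₁, hval⟩ := hmem
    have hm0pos : 0 < sInf Aset := by rw [hval]; exact abs_pos.2 hi₁
    have hbdd : BddBelow Aset := ⟨0, by rintro r ⟨i, _, rfl⟩; exact abs_nonneg _⟩
    have hM : ∀ i, |z i| ≤ ⨆ i, |z i| := fun i =>
      le_ciSup (Set.Finite.bddAbove (Set.finite_range fun i => |z i|)) i
    have hMK : (⨆ i, |z i|) ≤ K * sInf Aset := by
      have := hl
      rw [logDiamR, div_le_iff₀ hm0pos] at this
      exact this
    intro i j hj
    have h1 : sInf Aset ≤ |z j| := csInf_le hbdd ⟨j, hj, rfl⟩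
    calc |z i| ≤ ⨆ i, |z i| := hM i
      _ ≤ K * sInf Aset := hMK
      _ ≤ K * |z j| := by
          apply mul_le_mul_of_nonneg_left h1 (by linarith)
  -- choose sign class
  have hpn : ∑ i ∈ Finset.univ.filter (fun i => 0 < z i), z i ^ 2
      + ∑ i ∈ Finset.univ.filter (fun i => 0 < -z i), z i ^ 2 = ∑ i, z i ^ 2 := by
    rw [Finset.sum_filter, Finset.sum_filter, ← Finset.sum_add_distrib]
    apply Finset.sum_congr rfl
    intro i _
    rcases lt_trichotomy (z i) 0 with h | h | h
    · rw [if_neg (by linarith), if_pos (by linarith)]; ring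
    · simp [h]
    · rw [if_pos h, if_neg (by linarith)]; ring
  obtain ⟨ε, hε, hhalf⟩ : ∃ ε : ℝ, ε ^ 2 = 1 ∧
      (∑ i, z i ^ 2) ≤ 2 * ∑ i ∈ Finset.univ.filter (fun i => 0 < ε * z i), z i ^ 2 := by
    by_cases h : (∑ i, z i ^ 2) ≤ 2 * ∑ i ∈ Finset.univ.filter (fun i => 0 < z i), z i ^ 2
    · exact ⟨1, by norm_num, by simpa using h⟩
    · refine ⟨-1, by norm_num, ?_⟩
      push_neg at h
      have heq : Finset.univ.filter (fun i => 0 < (-1:ℝ) * z i)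
          = Finset.univ.filter (fun i => 0 < -z i) := by
        apply Finset.filter_congr
        intro i _
        constructor <;> intro h' <;> linarith [h']
      rw [heq]
      linarith
  set w : Fin n → ℝ := fun i => ε * z i with hw
  have hεabs : |ε| = 1 := by
    have h1 := abs_nonneg ε
    nlinarith [sq_abs ε]
  have hw2 : ∀ i, w i ^ 2 = z i ^ 2 := by intro i; rw [hw]; simp [mul_pow, hε]
  set S := Finset.univ.filter (fun i => 0 < w i) with hS
  have hWS : ∑ i ∈ S, z i ^ 2 = ∑ i ∈ Finset.univ.filter (fun i => 0 < ε * z i), z i ^ 2 := rfl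
  have hShalf : (∑ i, z i ^ 2) ≤ 2 * ∑ i ∈ S, z i ^ 2 := by rw [hWS]; exact hhalf
  have hSpos : 0 < ∑ i ∈ S, z i ^ 2 := by linarith
  set s := S.card with hs_def
  have hs : 0 < s := by
    rw [hs_def, Finset.card_pos]
    by_contra hemp
    rw [Finset.not_nonempty_iff_eq_empty] at hemp
    rw [hemp, Finset.sum_empty] at hSpos
    exact lt_irrefl 0 hSpos
  -- sorted enumeration of S
  set g : Fin s → ℝ := fun j => -(w ((S.equivFin.symm j) : Fin n)) with hg
  set π := Tuple.sort g with hπ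
  set σ : Fin s → Fin n := fun j => ((S.equivFin.symm (π j)) : Fin n) with hσ
  have hmemS : ∀ j, σ j ∈ S := fun j => (S.equivFin.symm (π j)).2
  have hwposS : ∀ i ∈ S, 0 < w i := by
    intro i hi; rw [hS] at hi; exact (Finset.mem_filter.1 hi).2
  have hσinj : Function.Injective σ := by
    intro a b hab
    apply π.injective
    apply S.equivFin.symm.injective
    exact Subtype.ext hab
  set c : ℕ → ℝ := fun m => if h : m < s then w (σ ⟨m, h⟩) else 1 with hc
  have hcpos : ∀ m, m < s → 0 < c m := by
    intro m hm; rw [hc]; simp only [dif_pos hm]; exact hwposS _ (hmemS _)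
  have hcval : ∀ j : Fin s, c (j : ℕ) = w (σ j) := by
    intro j; rw [hc]; simp only [Fin.is_lt, dif_pos, Fin.eta]
  have hanti : ∀ m1 m2 : ℕ, m1 ≤ m2 → m2 < s → c m2 ≤ c m1 := by
    intro m1 m2 h12 h2
    have h1 : m1 < s := lt_of_le_of_lt h12 h2
    have hmono := Tuple.monotone_sort g
      (show (⟨m1, h1⟩ : Fin s) ≤ ⟨m2, h2⟩ from h12)
    have hmono' : -(w (σ ⟨m1, h1⟩)) ≤ -(w (σ ⟨m2, h2⟩)) := hmono
    have e1 : c m1 = w (σ ⟨m1, h1⟩) := hcval ⟨m1, h1⟩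
    have e2 : c m2 = w (σ ⟨m2, h2⟩) := hcval ⟨m2, h2⟩
    rw [e1, e2]
    linarith [hmono']
  have habs : ∀ j : Fin s, w (σ j) = |z (σ j)| := by
    intro j
    have h1 : 0 < w (σ j) := hwposS _ (hmemS j)
    have h2 : |w (σ j)| = |z (σ j)| := by
      show |ε * z (σ j)| = |z (σ j)|
      rw [abs_mul, hεabs, one_mul]
    rw [← h2, abs_of_pos h1]
  have hzne : ∀ j : Fin s, z (σ j) ≠ 0 := by
    intro j h0
    have h1 : 0 < w (σ j) := hwposS _ (hmemS j)
    rw [hw] at h1; simp only [h0, mul_zero] at h1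
    exact lt_irrefl 0 h1
  have hrat : ∀ m, m < s → c 0 ≤ K * c m := by
    intro m hm
    have e0 : c 0 = |z (σ ⟨0, hs⟩)| := by
      have := hcval ⟨0, hs⟩; rw [← habs]; exact this
    have em : c m = |z (σ ⟨m, hm⟩)| := by
      have := hcval ⟨m, hm⟩; rw [← habs]; exact this
    rw [e0, em]
    exact hglob _ _ (hzne _)
  have hWsum : ∑ m ∈ Finset.range s, c m ^ 2 = ∑ i ∈ S, z i ^ 2 := by
    rw [← Fin.sum_univ_eq_sum_range (fun m => c m ^ 2) s]
    calc ∑ j : Fin s, c (j : ℕ) ^ 2 = ∑ j : Fin s, w (σ j) ^ 2 := by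
          exact Finset.sum_congr rfl fun j _ => by rw [hcval]
      _ = ∑ j : Fin s, w ((S.equivFin.symm j : ↥S) : Fin n) ^ 2 :=
          Equiv.sum_comp π (fun j => w ((S.equivFin.symm j : ↥S) : Fin n) ^ 2)
      _ = ∑ x : ↥S, w (x : Fin n) ^ 2 :=
          Equiv.sum_comp S.equivFin.symm (fun x : ↥S => w (x : Fin n) ^ 2)
      _ = ∑ i ∈ S, w i ^ 2 := Finset.sum_coe_sort S (fun i => w i ^ 2)
      _ = ∑ i ∈ S, z i ^ 2 := Finset.sum_congr rfl fun i _ => hw2 i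
  obtain ⟨k, hk1, hks, hkey⟩ := key s hs c hcpos hanti K hK hrat
  -- the prefix set
  have hbnd : ∀ m ∈ Finset.range k, m < s := fun m hm =>
    lt_of_lt_of_le (Finset.mem_range.1 hm) hks
  set T := ((Finset.range k).attachFin hbnd).image σ with hT
  have hTcard : T.card = k := by
    rw [hT, Finset.card_image_of_injective _ hσinj, Finset.card_attachFin,
      Finset.card_range]
  have hsum_w : ∑ i ∈ T, w i = ∑ m ∈ Finset.range k, c m := by
    rw [hT, Finset.sum_image (fun a _ b _ hab => hσinj hab)]
    apply Finset.sum_bij (i := fun (j : Fin s) (_ : j ∈ (Finset.range k).attachFin hbnd) => (j : ℕ))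
    · intro a ha
      exact (Finset.mem_attachFin hbnd).1 ha
    · intro a _ b _ hab
      exact Fin.val_injective hab
    · intro m hm
      exact ⟨⟨m, hbnd m hm⟩, (Finset.mem_attachFin hbnd).2 hm, rfl⟩
    · intro a _
      exact (hcval a).symm
  set ξ : Fin n → ℝ := fun i => if i ∈ T then 1 else 0 with hξ
  refine ⟨ξ, ?_, ?_, ?_⟩
  · intro i
    by_cases h : i ∈ T
    · right; simp [hξ, h]
    · left; simp [hξ, h]
  · have hTne : T.Nonempty := Finset.card_pos.1 (by rw [hTcard]; omega)
    obtain ⟨i1, hi1⟩ := hTne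
    intro h0
    have h1 : ξ i1 = 0 := congrFun h0 i1
    rw [hξ] at h1
    simp [hi1] at h1
  · have hzsum : ∑ i, z i * ξ i = ∑ i ∈ T, z i := by
      rw [hξ]
      simp only [mul_ite, mul_one, mul_zero]
      rw [Finset.sum_ite_mem, Finset.univ_inter]
    have hzw : ∑ i ∈ T, z i = ε * ∑ i ∈ T, w i := by
      rw [Finset.mul_sum]
      apply Finset.sum_congr rfl
      intro i _
      rw [hw]
      have : ε * (ε * z i) = ε ^ 2 * z i := by ring
      rw [this, hε, one_mul]
    have hPknn : 0 ≤ ∑ m ∈ Finset.range k, c m :=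
      Finset.sum_nonneg fun m hm => le_of_lt (hcpos m (hbnd m hm))
    have hPk_eq : |∑ i, z i * ξ i| = ∑ m ∈ Finset.range k, c m := by
      rw [hzsum, hzw, abs_mul, hεabs, one_mul, hsum_w, abs_of_nonneg hPknn]
    have hξsq : ∑ i, ξ i ^ 2 = (k : ℝ) := by
      rw [hξ]
      calc ∑ i, (if i ∈ T then (1:ℝ) else 0) ^ 2
          = ∑ i, (if i ∈ T then (1:ℝ) else 0) :=
            Finset.sum_congr rfl fun i _ => by by_cases h : i ∈ T <;> simp [h]
        _ = ∑ i ∈ T, (1:ℝ) := by rw [Finset.sum_ite_mem, Finset.univ_inter]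
        _ = (k : ℝ) := by rw [Finset.sum_const, hTcard]; simp
    have hL0 : 0 ≤ Real.log K := Real.log_nonneg hK
    have hkZ : (k : ℝ) * (∑ i, z i ^ 2) ≤
        (∑ m ∈ Finset.range k, c m) ^ 2 * (2 * (Real.log K + 1)) := by
      have hZW : (∑ i, z i ^ 2) ≤ 2 * ∑ m ∈ Finset.range s, c m ^ 2 := by
        rw [hWsum]; exact hShalf
      have hknn : (0:ℝ) ≤ (k : ℝ) := Nat.cast_nonneg k
      nlinarith [hkey, hZW, hknn]
    rw [ge_iff_le, hPk_eq]
    simp only [enR]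
    rw [hξsq]
    have hsZ : 0 < Real.sqrt (∑ i, z i ^ 2) := Real.sqrt_pos.2 hZpos
    have hsk : 0 < Real.sqrt (k : ℝ) := by
      apply Real.sqrt_pos.2
      have : (0:ℕ) < k := by omega
      exact_mod_cast this
    have hs2L : 0 < Real.sqrt (2 * (Real.log K + 1)) := by
      apply Real.sqrt_pos.2; linarith
    rw [div_le_div_iff₀ hs2L (mul_pos hsZ hsk), one_mul]
    apply le_of_pow_le_pow_left₀ two_ne_zero
      (mul_nonneg hPknn (Real.sqrt_nonneg _))
    rw [mul_pow, mul_pow, Real.sq_sqrt (le_of_lt hZpos),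
      Real.sq_sqrt (Nat.cast_nonneg k), Real.sq_sqrt (by linarith : (0:ℝ) ≤ 2 * (Real.log K + 1))]
    nlinarith [hkZ]
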